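/- Let m be a positive integer divisible by 64, and let A ⊆ B ⊆ [m] with |A| = m/16 and |B| = m/8. Then the number of subsets C ⊆ B with |C| = m/16 and |C ∩ A| ≤ m/64 is at most e^{-m/256} · C(m/8, m/16), where C(a,b) denotes the binomial coefficient. -/

import Mathlib

open Finset Nat

lemma fact_ineq (k : ℕ) :
    (2*k)! ^ 2 * 3^k ≤ k ! * (3*k)! * 2^k := by
  induction k with
  | zero => simp
  | succ k ih =>
    have e1 : (2*(k+1))! = (2*k+2)*((2*k+1)*(2*k)!) := by
      have h : 2*(k+1) = (2*k+1)+1 := by ring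
      rw [h, Nat.factorial_succ, Nat.factorial_succ]
    have e2 : (3*(k+1))! = (3*k+3)*((3*k+2)*((3*k+1)*(3*k)!)) := by
      have h : 3*(k+1) = ((3*k+1)+1)+1 := by ring
      rw [h, Nat.factorial_succ, Nat.factorial_succ, Nat.factorial_succ]
    have e3 : (k+1)! = (k+1)*k ! := Nat.factorial_succ k
    have hab : ((2*k+2)*(2*k+1))^2*3 ≤ (k+1)*((3*k+3)*((3*k+2)*(3*k+1)))*2 := by
      have hq : 2*(2*k+1)^2 ≤ (3*k+1)*(3*k+2) := by nlinarith
      calc ((2*k+2)*(2*k+1))^2*3 = 6*(k+1)^2*(2*(2*k+1)^2) := by ring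
        _ ≤ 6*(k+1)^2*((3*k+1)*(3*k+2)) := Nat.mul_le_mul_left _ hq
        _ = (k+1)*((3*k+3)*((3*k+2)*(3*k+1)))*2 := by ring
    calc (2*(k+1))! ^ 2 * 3^(k+1)
        = (((2*k+2)*(2*k+1))^2*3) * ((2*k)! ^2 * 3^k) := by rw [e1]; ring
      _ ≤ ((k+1)*((3*k+3)*((3*k+2)*(3*k+1)))*2) * (k ! * (3*k)! * 2^k) :=
          Nat.mul_le_mul hab ih
      _ = (k+1)! * (3*(k+1))! * 2^(k+1) := by rw [e2, e3]; ring

lemma choose_ratio (k : ℕ) :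
    (4*k).choose k * 3^k ≤ (4*k).choose (2*k) * 2^k := by
  have h1 : (4*k).choose k * k ! * (3*k)! = (4*k)! := by
    have := Nat.choose_mul_factorial_mul_factorial (show k ≤ 4*k by omega)
    rwa [show 4*k - k = 3*k by omega] at this
  have h2 : (4*k).choose (2*k) * (2*k)! * (2*k)! = (4*k)! := by
    have := Nat.choose_mul_factorial_mul_factorial (show 2*k ≤ 4*k by omega)
    rwa [show 4*k - 2*k = 2*k by omega] at this
  have hpos : 0 < (2*k)! ^ 2 := pow_pos (Nat.factorial_pos _) _
  refine Nat.le_of_mul_le_mul_right ?_ hpos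
  calc (4*k).choose k * 3^k * (2*k)! ^2
      = (4*k).choose k * ((2*k)! ^2 * 3^k) := by ring
    _ ≤ (4*k).choose k * (k ! * (3*k)! * 2^k) :=
        Nat.mul_le_mul_left _ (fact_ineq k)
    _ = ((4*k).choose k * k ! * (3*k)!) * 2^k := by ring
    _ = (4*k)! * 2^k := by rw [h1]
    _ = ((4*k).choose (2*k) * (2*k)! * (2*k)!) * 2^k := by rw [h2]
    _ = (4*k).choose (2*k) * 2^k * (2*k)! ^2 := by ring

lemma choose_triple {n j : ℕ} (h : 3*(j+1) ≤ n - j) :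
    3 * n.choose j ≤ n.choose (j+1) := by
  have key := Nat.choose_succ_right_eq n j
  refine Nat.le_of_mul_le_mul_right ?_ (Nat.succ_pos j)
  calc 3 * n.choose j * (j+1) = n.choose j * (3*(j+1)) := by ring
    _ ≤ n.choose j * (n - j) := Nat.mul_le_mul_left _ h
    _ = n.choose (j+1) * (j+1) := key.symm

lemma choose_pow_le (k : ℕ) : ∀ i, i ≤ k →
    (4*k).choose (k - i) * 3^i ≤ (4*k).choose k := by
  intro i
  induction i with
  | zero => simp
  | succ i ih =>
    intro hik
    have h1 : 3 * (4*k).choose (k - (i+1)) ≤ (4*k).choose (k - i) := by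
      have he : k - (i+1) + 1 = k - i := by omega
      have := choose_triple (n := 4*k) (j := k - (i+1)) (by omega)
      rwa [he] at this
    calc (4*k).choose (k - (i+1)) * 3^(i+1)
        = (3 * (4*k).choose (k - (i+1))) * 3^i := by ring
      _ ≤ (4*k).choose (k - i) * 3^i := Nat.mul_le_mul_right _ h1
      _ ≤ (4*k).choose k := ih (by omega)

lemma vander (k : ℕ) : (4*k).choose (2*k) ^ 2 ≤ (8*k).choose (4*k) := by
  have h := Nat.add_choose_eq (4*k) (4*k) (4*k)
  rw [show 4*k+4*k = 8*k by ring] at h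
  rw [h, sq]
  have hmem : ((2*k, 2*k) : ℕ × ℕ) ∈ antidiagonal (4*k) := by
    rw [Finset.HasAntidiagonal.mem_antidiagonal]; ring
  exact Finset.single_le_sum (f := fun ij => (4*k).choose ij.1 * (4*k).choose ij.2)
    (fun _ _ => Nat.zero_le _) hmem

lemma my_geom_le (n : ℕ) : ∑ i ∈ Finset.range n, ((1:ℝ)/9)^i ≤ 9/8 := by
  have h := geom_sum_eq (show (1:ℝ)/9 ≠ 1 by norm_num) n
  rw [h]
  have h9 : (0:ℝ) ≤ (1/9)^n := by positivity
  calc ((1/9:ℝ)^n - 1)/((1/9)-1) = (1-(1/9)^n)*(9/8) := by ring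
    _ ≤ 1*(9/8) := by nlinarith
    _ = 9/8 := by ring

lemma my_geom_le' (k : ℕ) : ∑ j ∈ Finset.range (k+1), ((1:ℝ)/9)^(k-j) ≤ 9/8 := by
  have h := Finset.sum_range_reflect (fun i => ((1:ℝ)/9)^i) (k+1)
  simp only [Nat.add_sub_cancel] at h
  rw [h]
  exact my_geom_le (k+1)

/-- |K_B \ J_A| ≤ e^{-m/256} · C(m/8, m/16). -/
theorem stmt_3 (m : ℕ) (hm : 0 < m) (hdvd : 64 ∣ m)
    (A B : Finset (Fin m)) (hAB : A ⊆ B)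
    (hA : A.card = m / 16) (hB : B.card = m / 8) :
    ((Finset.univ.filter (fun C : Finset (Fin m) =>
        C ⊆ B ∧ C.card = m / 16 ∧ (C ∩ A).card ≤ m / 64)).card : ℝ) ≤
      Real.exp (-(m / 256 : ℝ)) * Nat.choose (m / 8) (m / 16) := by
  obtain ⟨k, rfl⟩ := hdvd
  have hk : 1 ≤ k := by omega
  have h16 : 64*k/16 = 4*k := by omega
  have h8 : 64*k/8 = 8*k := by omega
  have h64 : 64*k/64 = k := by omega
  simp only [h16, h8, h64] at hA hB ⊢
  have hBA : (B \ A).card = 4*k := by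
    rw [Finset.card_sdiff_of_subset hAB, hA, hB]; omega
  -- counting step
  have hcount : (Finset.univ.filter (fun C : Finset (Fin (64*k)) =>
        C ⊆ B ∧ C.card = 4*k ∧ (C ∩ A).card ≤ k)).card
      ≤ ∑ j ∈ range (k+1), (4*k).choose j * (4*k).choose (4*k - j) := by
    refine le_trans (Finset.card_le_card_of_injOn
      (fun C => (C ∩ A, C \ A))
      (t := (range (k+1)).biUnion
        (fun j => A.powersetCard j ×ˢ (B \ A).powersetCard (4*k - j))) ?_ ?_) ?_
    · intro C hC
      simp only [Finset.mem_coe, mem_filter, mem_univ, true_and] at hC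
      obtain ⟨hCB, hCc, hCA⟩ := hC
      show (C ∩ A, C \ A) ∈ _
      rw [Finset.mem_coe, mem_biUnion]
      refine ⟨(C ∩ A).card, by rw [mem_range]; omega, ?_⟩
      rw [mem_product]
      dsimp only
      constructor
      · rw [Finset.mem_powersetCard]
        exact ⟨Finset.inter_subset_right, rfl⟩
      · rw [Finset.mem_powersetCard]
        refine ⟨Finset.sdiff_subset_sdiff hCB (Finset.Subset.refl A), ?_⟩
        have h := Finset.card_inter_add_card_sdiff C A
        omega
    · intro C _ D _ hEq
      simp only [Prod.mk.injEq] at hEq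
      obtain ⟨h1, h2⟩ := hEq
      have hC' : C ∩ A ∪ C \ A = C := by ext x; simp; tauto
      have hD' : D ∩ A ∪ D \ A = D := by ext x; simp; tauto
      rw [← hC', ← hD', h1, h2]
    · refine le_trans Finset.card_biUnion_le (Finset.sum_le_sum ?_)
      intro j _
      rw [Finset.card_product, Finset.card_powersetCard, Finset.card_powersetCard,
        hA, hBA]
  -- per-term bound in ℝ
  have hterm : ∀ j ∈ range (k+1),
      (((4*k).choose j * (4*k).choose (4*k - j) : ℕ) : ℝ)
        ≤ ((4*k).choose k : ℝ)^2 * (1/9)^(k-j) := by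
    intro j hj
    rw [mem_range] at hj
    have hjk : j ≤ k := by omega
    have hsym : (4*k).choose (4*k - j) = (4*k).choose j :=
      Nat.choose_symm (by omega)
    have hle : (4*k).choose j * 3^(k-j) ≤ (4*k).choose k := by
      have h := choose_pow_le k (k - j) (by omega)
      rwa [show k - (k-j) = j by omega] at h
    have hsq : ((4*k).choose j)^2 * 9^(k-j) ≤ ((4*k).choose k)^2 := by
      calc ((4*k).choose j)^2 * 9^(k-j)
          = ((4*k).choose j * 3^(k-j))^2 := by
            rw [mul_pow, ← pow_mul, mul_comm (k-j) 2, pow_mul]; norm_num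
        _ ≤ ((4*k).choose k)^2 := Nat.pow_le_pow_left hle 2
    have hsqR : ((4*k).choose j : ℝ)^2 * 9^(k-j) ≤ ((4*k).choose k : ℝ)^2 := by
      exact_mod_cast hsq
    have h9 : (0:ℝ) < 9^(k-j) := by positivity
    push_cast
    rw [hsym]
    calc ((4*k).choose j : ℝ) * ((4*k).choose j) = ((4*k).choose j : ℝ)^2 := (sq _).symm
      _ ≤ ((4*k).choose k : ℝ)^2 / 9^(k-j) := by rw [le_div_iff₀ h9]; exact hsqR
      _ = ((4*k).choose k : ℝ)^2 * (1/9)^(k-j) := by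
          rw [div_eq_mul_inv, one_div, inv_pow]
  have hsum : ((∑ j ∈ range (k+1), (4*k).choose j * (4*k).choose (4*k - j) : ℕ) : ℝ)
      ≤ ((4*k).choose k : ℝ)^2 * (9/8) := by
    push_cast
    calc ∑ j ∈ range (k+1), ((4*k).choose j : ℝ) * ((4*k).choose (4*k - j))
        ≤ ∑ j ∈ range (k+1), ((4*k).choose k : ℝ)^2 * (1/9)^(k-j) := by
          refine Finset.sum_le_sum ?_
          intro j hj
          have := hterm j hj
          push_cast at this
          exact this
      _ = ((4*k).choose k : ℝ)^2 * ∑ j ∈ range (k+1), ((1:ℝ)/9)^(k-j) := by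
          rw [Finset.mul_sum]
      _ ≤ ((4*k).choose k : ℝ)^2 * (9/8) := by
          refine mul_le_mul_of_nonneg_left (my_geom_le' k) (by positivity)
  -- ratio bound in ℝ
  have hratioR : ((3:ℝ)/2)^k * ((4*k).choose k : ℝ) ≤ ((4*k).choose (2*k) : ℝ) := by
    have hR : ((4*k).choose k : ℝ) * 3^k ≤ ((4*k).choose (2*k) : ℝ) * 2^k := by
      exact_mod_cast choose_ratio k
    have h2 : (0:ℝ) < 2^k := by positivity
    rw [div_pow, div_mul_eq_mul_div, div_le_iff₀ h2]
    linarith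
  have hvR : ((4*k).choose (2*k) : ℝ)^2 ≤ ((8*k).choose (4*k) : ℝ) := by
    exact_mod_cast vander k
  -- exponential bound
  have hexp : ((1:ℝ)/2)^k ≤ Real.exp (-((64*k : ℕ) / 256 : ℝ)) := by
    have he : Real.exp (1/4) ≤ 2 := by
      rw [show (2:ℝ) = Real.exp (Real.log 2) from (Real.exp_log two_pos).symm]
      exact Real.exp_le_exp.mpr (le_of_lt (lt_trans (by norm_num) Real.log_two_gt_d9))
    have he' : (1/2:ℝ) ≤ Real.exp (-(1/4)) := by
      rw [Real.exp_neg, one_div]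
      exact inv_anti₀ (Real.exp_pos _) he
    have harg : -(((64*k : ℕ) : ℝ) / 256) = (k : ℝ) * (-(1/4)) := by
      push_cast; ring
    rw [harg, Real.exp_nat_mul]
    exact pow_le_pow_left₀ (by norm_num) he' k
  -- final chain
  have hfinal : ((4*k).choose k : ℝ)^2 * (9/8)
      ≤ Real.exp (-((64*k : ℕ) / 256 : ℝ)) * ((8*k).choose (4*k) : ℝ) := by
    have hCk : (0:ℝ) ≤ ((4*k).choose k : ℝ) := Nat.cast_nonneg _
    calc ((4*k).choose k : ℝ)^2 * (9/8)
        ≤ ((4*k).choose k : ℝ)^2 * (9/8)^k := by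
          refine mul_le_mul_of_nonneg_left (le_self_pow₀ (by norm_num) (show k ≠ 0 by omega)) (by positivity)
      _ = (1/2)^k * (((3:ℝ)/2)^k * ((4*k).choose k : ℝ))^2 := by
          have e1 : ((3:ℝ)/2)^(k*2) = (9/4)^k := by
            rw [mul_comm k 2, pow_mul]; norm_num
          have e2 : ((9:ℝ)/8)^k = (1/2)^k * (9/4)^k := by
            rw [← mul_pow]; norm_num
          rw [mul_pow, ← pow_mul, e1, e2]; ring
      _ ≤ (1/2)^k * ((4*k).choose (2*k) : ℝ)^2 := by
          refine mul_le_mul_of_nonneg_left ?_ (by positivity)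
          exact pow_le_pow_left₀ (by positivity) hratioR 2
      _ ≤ (1/2)^k * ((8*k).choose (4*k) : ℝ) :=
          mul_le_mul_of_nonneg_left hvR (by positivity)
      _ ≤ Real.exp (-((64*k : ℕ) / 256 : ℝ)) * ((8*k).choose (4*k) : ℝ) :=
          mul_le_mul_of_nonneg_right hexp (Nat.cast_nonneg _)
  calc ((Finset.univ.filter (fun C : Finset (Fin (64*k)) =>
        C ⊆ B ∧ C.card = 4*k ∧ (C ∩ A).card ≤ k)).card : ℝ)
      ≤ ((∑ j ∈ range (k+1), (4*k).choose j * (4*k).choose (4*k - j) : ℕ) : ℝ) := by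
        exact_mod_cast hcount
    _ ≤ ((4*k).choose k : ℝ)^2 * (9/8) := hsum
    _ ≤ Real.exp (-((64*k : ℕ) / 256 : ℝ)) * ((8*k).choose (4*k) : ℝ) := hfinal
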